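/- Let R be a Prüfer domain and P a nonzero branched prime that is the radical of a finitely generated ideal. Then there exists a proper P-primary ideal of R that is divisorial. -/

import Mathlib

/-- An ideal is divisorial if `I = (R : (R : I))`, phrased via fractional ideals. -/
def IsDivisorial (R : Type*) [CommRing R] [IsDomain R] (I : Ideal R) : Prop :=
  (1 / (1 / (I : FractionalIdeal (nonZeroDivisors R) (FractionRing R))) :
    FractionalIdeal (nonZeroDivisors R) (FractionRing R))
    = (I : FractionalIdeal (nonZeroDivisors R) (FractionRing R))

/-- An ideal is invertible if it is a unit as a fractional ideal. -/
def IsInvertibleIdeal (R : Type*) [CommRing R] [IsDomain R] (I : Ideal R) : Prop :=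
  IsUnit (I : FractionalIdeal (nonZeroDivisors R) (FractionRing R))

/-- A Prüfer domain: every nonzero finitely generated ideal is invertible. -/
def IsPrufer (R : Type*) [CommRing R] [IsDomain R] : Prop :=
  ∀ I : Ideal R, I ≠ ⊥ → I.FG → IsInvertibleIdeal R I

/-- A prime `P` is sharp if it contains a finitely generated ideal contained
only in the maximal ideals that contain `P`. -/
def IsSharp (R : Type*) [CommRing R] (P : Ideal R) : Prop :=
  ∃ I : Ideal R, I.FG ∧ I ≤ P ∧ ∀ M : Ideal R, M.IsMaximal → I ≤ M → P ≤ M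


section Helpers

variable {R : Type*} [CommRing R] [IsDomain R]

local notation "K" => FractionRing R
local notation "alg" => algebraMap R (FractionRing R)
local notation "F" => FractionalIdeal (nonZeroDivisors R) (FractionRing R)

/-- Globalization: an element of `K` that is locally integral is integral. -/
lemma glob_mem_one (x : FractionRing R)
    (h : ∀ M : Ideal R, M.IsMaximal → ∃ σ ∉ M, ∃ r : R, alg σ * x = alg r) :
    ∃ r : R, alg r = x := by
  set D : Ideal R :=
    { carrier := {σ : R | ∃ r : R, alg σ * x = alg r}
      zero_mem' := ⟨0, by simp⟩
      add_mem' := by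
        rintro a b ⟨r, hr⟩ ⟨s, hs⟩
        exact ⟨r + s, by rw [map_add, add_mul, hr, hs, map_add]⟩
      smul_mem' := by
        rintro c a ⟨r, hr⟩
        refine ⟨c * r, ?_⟩
        rw [smul_eq_mul, map_mul, map_mul, mul_assoc, hr]} with hD
  have hDtop : D = ⊤ := by
    by_contra hne
    obtain ⟨M, hM, hle⟩ := Ideal.exists_le_maximal D hne
    obtain ⟨σ, hσ, r, hr⟩ := h M hM
    exact hσ (hle ⟨r, hr⟩)
  have h1 : (1 : R) ∈ D := hDtop ▸ Submodule.mem_top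
  obtain ⟨r, hr⟩ := h1
  exact ⟨r, by rw [← hr, map_one, one_mul]⟩

/-- Globalization for ideal membership. -/
lemma glob_mem_ideal (Q : Ideal R) (x : R)
    (h : ∀ M : Ideal R, M.IsMaximal → ∃ σ ∉ M, σ * x ∈ Q) : x ∈ Q := by
  set D : Ideal R :=
    { carrier := {σ : R | σ * x ∈ Q}
      zero_mem' := by simp
      add_mem' := by
        intro a b ha hb
        simpa [add_mul] using Q.add_mem ha hb
      smul_mem' := by
        intro c a ha
        simpa [smul_eq_mul, mul_assoc] using Q.mul_mem_left c ha } with hD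
  have hDtop : D = ⊤ := by
    by_contra hne
    obtain ⟨M, hM, hle⟩ := Ideal.exists_le_maximal D hne
    obtain ⟨σ, hσ, hσx⟩ := h M hM
    exact hσ (hle hσx)
  have h1 : (1 : R) ∈ D := hDtop ▸ Submodule.mem_top
  have h2 : (1 : R) * x ∈ Q := h1
  simpa using h2

/-- Local comparability of two elements, from the Prüfer hypothesis. -/
lemma prufer_comp (hR : IsPrufer R) (M : Ideal R) (hM : M.IsMaximal) (a b : R) :
    ∃ s ∉ M, (∃ r : R, s * a = b * r) ∨ (∃ r : R, s * b = a * r) := by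
  have h1M : (1 : R) ∉ M := fun h => hM.ne_top ((Ideal.eq_top_iff_one M).mpr h)
  rcases eq_or_ne a 0 with ha | ha
  · exact ⟨1, h1M, Or.inl ⟨0, by simp [ha]⟩⟩
  rcases eq_or_ne b 0 with hb | hb
  · exact ⟨1, h1M, Or.inr ⟨0, by simp [hb]⟩⟩
  set I : Ideal R := Ideal.span {a, b} with hI
  have haI : a ∈ I := Ideal.subset_span (by simp)
  have hbI : b ∈ I := Ideal.subset_span (by simp)
  have hI0 : I ≠ ⊥ := fun h => ha (by simpa [h] using haI)
  have hIfg : I.FG := Submodule.fg_span ((Set.finite_singleton b).insert a)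
  have hU : IsUnit (I : F) := hR I hI0 hIfg
  obtain ⟨C, hC⟩ := hU.exists_right_inv
  have hmem1 : (1 : K) ∈ ((I : F) * C) := by
    rw [hC]; exact FractionalIdeal.one_mem_one _
  have hinj := IsFractionRing.injective R K
  -- decompose 1 as alg a * w₁ + alg b * w₂ with w₁ w₂ ∈ C
  have key : ∀ ξ ∈ ((I : F) * C), ∃ w₁ ∈ C, ∃ w₂ ∈ C,
      ξ = alg a * w₁ + alg b * w₂ := by
    intro ξ hξ
    have hξ' : ξ ∈ ((I : F) : Submodule R K) * (C : Submodule R K) := by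
      rwa [← FractionalIdeal.coe_mul, FractionalIdeal.mem_coe]
    refine Submodule.mul_induction_on hξ' ?_ ?_
    · intro m hm n hn
      obtain ⟨xx, hxxI, rfl⟩ := (FractionalIdeal.mem_coeIdeal _).mp hm
      obtain ⟨u, v, huv⟩ := Ideal.mem_span_pair.mp (hI ▸ hxxI)
      refine ⟨alg u * n, ?_, alg v * n, ?_, ?_⟩
      · simpa [Algebra.smul_def] using C.val.smul_mem u hn
      · simpa [Algebra.smul_def] using C.val.smul_mem v hn
      · rw [← huv]; push_cast [map_add, map_mul]; ring
    · rintro ξ₁ ξ₂ ⟨w₁, hw₁, w₂, hw₂, rfl⟩ ⟨w₁', hw₁', w₂', hw₂', rfl⟩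
      exact ⟨w₁ + w₁', C.val.add_mem hw₁ hw₁', w₂ + w₂', C.val.add_mem hw₂ hw₂', by ring⟩
  obtain ⟨w₁, hw₁, w₂, hw₂, hsum⟩ := key 1 hmem1
  have hprod : ∀ x : R, x ∈ I → ∀ w ∈ C, ∃ r : R, alg r = alg x * w := by
    intro x hx w hw
    have : alg x * w ∈ ((I : F) * C) :=
      FractionalIdeal.mul_mem_mul (((FractionalIdeal.mem_coeIdeal _).mpr ⟨x, hx, rfl⟩)) hw
    rw [hC] at this
    exact (FractionalIdeal.mem_one_iff _).mp this
  obtain ⟨r₁, hr₁⟩ := hprod a haI w₁ hw₁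
  obtain ⟨r₂, hr₂⟩ := hprod b hbI w₂ hw₂
  obtain ⟨r₃, hr₃⟩ := hprod b hbI w₁ hw₁
  obtain ⟨r₄, hr₄⟩ := hprod a haI w₂ hw₂
  have hr12 : r₁ + r₂ = 1 := by
    apply hinj
    rw [map_add, hr₁, hr₂, map_one, hsum]
  have hcases : r₁ ∉ M ∨ r₂ ∉ M := by
    by_contra h
    push_neg at h
    exact h1M (by rw [← hr12]; exact M.add_mem h.1 h.2)
  rcases hcases with h | h
  · refine ⟨r₁, h, Or.inr ⟨r₃, hinj ?_⟩⟩
    rw [map_mul, map_mul, hr₁, hr₃]; ring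
  · refine ⟨r₂, h, Or.inl ⟨r₄, hinj ?_⟩⟩
    rw [map_mul, map_mul, hr₂, hr₄]; ring

end Helpers

section Helpers2

set_option linter.unusedSectionVars false

variable {R : Type*} [CommRing R] [IsDomain R]

local notation "K" => FractionRing R
local notation "alg" => algebraMap R (FractionRing R)
local notation "F" => FractionalIdeal (nonZeroDivisors R) (FractionRing R)

/-- Division step inside a prime, locally at a maximal ideal. -/
lemma prufer_step (hR : IsPrufer R) {P : Ideal R} (hP : P.IsPrime)
    {M : Ideal R} (hM : M.IsMaximal) (hPM : P ≤ M) {t : R} (ht : t ∉ P)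
    {q : R} (hq : q ∈ P) : ∃ s ∉ M, ∃ c ∈ P, s * q = t * c := by
  obtain ⟨s, hsM, hcase⟩ := prufer_comp hR M hM q t
  rcases hcase with ⟨r, hr⟩ | ⟨r, hr⟩
  · -- s * q = t * r
    have hrP : r ∈ P := by
      have : t * r ∈ P := hr ▸ P.mul_mem_left s hq
      exact (hP.mem_or_mem this).resolve_left ht
    exact ⟨s, hsM, r, hrP, hr⟩
  · -- s * t = q * r, impossible
    exfalso
    have : s * t ∈ P := hr ▸ P.mul_mem_right r hq
    rcases hP.mem_or_mem this with h | h
    · exact hsM (hPM h)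
    · exact ht h

lemma prufer_step_pow (hR : IsPrufer R) {P : Ideal R} (hP : P.IsPrime)
    {M : Ideal R} (hM : M.IsMaximal) (hPM : P ≤ M) {t : R} (ht : t ∉ P)
    (n : ℕ) {q : R} (hq : q ∈ P) : ∃ s ∉ M, ∃ c ∈ P, s * q = t ^ n * c := by
  induction n with
  | zero =>
    exact ⟨1, fun h => hM.ne_top ((Ideal.eq_top_iff_one M).mpr h), q, hq, by ring⟩
  | succ n ih =>
    obtain ⟨s, hsM, c, hcP, heq⟩ := ih
    obtain ⟨s', hs'M, c', hc'P, heq'⟩ := prufer_step hR hP hM hPM ht hcP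
    refine ⟨s' * s, fun h => ?_, c', hc'P, ?_⟩
    · rcases hM.isPrime.mem_or_mem h with h | h
      exacts [hs'M h, hsM h]
    · calc s' * s * q = s' * (s * q) := by ring
        _ = s' * (t ^ n * c) := by rw [heq]
        _ = t ^ n * (s' * c) := by ring
        _ = t ^ n * (t * c') := by rw [heq']
        _ = t ^ (n + 1) * c' := by ring

/-- Clearing denominators for a finitely generated ideal. -/
lemma prufer_clear (hR : IsPrufer R) {P : Ideal R} (hP : P.IsPrime)
    {B : Ideal R} (hBfg : B.FG) (hBP : B ≤ P)
    {M : Ideal R} (hM : M.IsMaximal) (hPM : P ≤ M) {t : R} (ht : t ∉ P)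
    (n : ℕ) : ∃ s ∉ M, ∀ b ∈ B, ∃ r : R, s * b = t ^ n * r := by
  classical
  obtain ⟨T, hT⟩ := hBfg
  have hTmem : ∀ b ∈ T, (b : R) ∈ P := fun b hb =>
    hBP (hT ▸ Ideal.subset_span hb)
  choose! s hs c hcP heq using fun b (hb : b ∈ T) =>
    prufer_step_pow hR hP hM hPM ht n (hTmem b hb)
  refine ⟨∏ b ∈ T, s b, ?_, ?_⟩
  · refine Finset.prod_induction s (· ∉ M) (fun a b ha hb h => ?_)
      (fun h => hM.ne_top ((Ideal.eq_top_iff_one M).mpr h)) (fun b hb => hs b hb)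
    rcases hM.isPrime.mem_or_mem h with h | h
    exacts [ha h, hb h]
  · intro b hb
    rw [← hT] at hb
    induction hb using Submodule.span_induction with
    | mem x hx =>
      have hxT : x ∈ T := Finset.mem_coe.mp hx
      refine ⟨(∏ b ∈ T.erase x, s b) * c x, ?_⟩
      rw [← Finset.mul_prod_erase T s hxT]
      calc (s x * ∏ b ∈ T.erase x, s b) * x
          = (∏ b ∈ T.erase x, s b) * (s x * x) := by ring
        _ = (∏ b ∈ T.erase x, s b) * (t ^ n * c x) := by rw [heq x hxT]
        _ = t ^ n * ((∏ b ∈ T.erase x, s b) * c x) := by ring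
    | zero => exact ⟨0, by ring⟩
    | add x y _ _ hx hy =>
      obtain ⟨r₁, h₁⟩ := hx
      obtain ⟨r₂, h₂⟩ := hy
      exact ⟨r₁ + r₂, by rw [mul_add, h₁, h₂]; ring⟩
    | smul a x _ hx =>
      obtain ⟨r, hr⟩ := hx
      exact ⟨a * r, by rw [smul_eq_mul, show (∏ b ∈ T, s b) * (a * x) =
        a * ((∏ b ∈ T, s b) * x) by ring, hr]; ring⟩

end Helpers2


section Helpers3

set_option linter.unusedSectionVars false
set_option maxHeartbeats 1000000

variable {R : Type*} [CommRing R] [IsDomain R]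

local notation "K" => FractionRing R
local notation "alg" => algebraMap R (FractionRing R)
local notation "F" => FractionalIdeal (nonZeroDivisors R) (FractionRing R)

lemma mem_one_mul_mem_one {w v : K} (hw : w ∈ (1 : F)) (hv : v ∈ (1 : F)) :
    w * v ∈ (1 : F) := by
  obtain ⟨r, hr⟩ := (FractionalIdeal.mem_one_iff _).mp hw
  obtain ⟨p, hp⟩ := (FractionalIdeal.mem_one_iff _).mp hv
  exact (FractionalIdeal.mem_one_iff _).mpr ⟨r * p, by rw [map_mul, hr, hp]⟩

lemma my_one_le_one_div {P : Ideal R} (hP0 : P ≠ ⊥) :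
    (1 : F) ≤ 1 / (P : F) := by
  intro w hw
  refine (FractionalIdeal.mem_div_iff_of_ne_zero
    (FractionalIdeal.coeIdeal_ne_zero.mpr hP0)).mpr ?_
  intro v hv
  exact mem_one_mul_mem_one hw (FractionalIdeal.coeIdeal_le_one hv)

lemma my_one_div_ne_zero {P : Ideal R} (hP0 : P ≠ ⊥) :
    (1 / (P : F)) ≠ 0 := by
  intro h
  have h1 : (1 : K) ∈ (1 / (P : F)) :=
    my_one_le_one_div hP0 (FractionalIdeal.one_mem_one _)
  rw [h] at h1
  exact one_ne_zero ((FractionalIdeal.mem_zero_iff _).mp h1)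

/-- `P ≤ Pᵛ`. -/
lemma my_self_le_div_div {P : Ideal R} (hP0 : P ≠ ⊥) :
    (P : F) ≤ 1 / (1 / (P : F)) := by
  intro w hw
  refine (FractionalIdeal.mem_div_iff_of_ne_zero (my_one_div_ne_zero hP0)).mpr ?_
  intro v hv
  have hv' := (FractionalIdeal.mem_div_iff_of_ne_zero
    (FractionalIdeal.coeIdeal_ne_zero.mpr hP0)).mp hv
  rw [mul_comm]
  exact hv' w hw

lemma my_div_div_ne_zero {P : Ideal R} (hP0 : P ≠ ⊥) :
    (1 / (1 / (P : F))) ≠ 0 := by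
  intro h
  obtain ⟨p, hpP, hp0⟩ := Submodule.exists_mem_ne_zero_of_ne_bot hP0
  have h1 : alg p ∈ (1 / (1 / (P : F))) :=
    my_self_le_div_div hP0 ((FractionalIdeal.mem_coeIdeal _).mpr ⟨p, hpP, rfl⟩)
  rw [h] at h1
  have := (FractionalIdeal.mem_zero_iff _).mp h1
  exact hp0 ((map_eq_zero_iff _ (IsFractionRing.injective R K)).mp this)

/-- The key sharpness lemma. -/
lemma prufer_key (hR : IsPrufer R) {P : Ideal R} (hP : P.IsPrime) (hP0 : P ≠ ⊥)
    {B : Ideal R} (hBfg : B.FG) (hBrad : B.radical = P)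
    {M : Ideal R} (hM : M.IsMaximal) (hPM : P ≤ M) {t : R} (ht : t ∉ P) (n : ℕ)
    {u : K} (hu : u ∈ (1 / (1 / (P : F)))) :
    ∃ s ∉ M, ∃ r : R, alg s * u = alg (t ^ n) * alg r := by
  have hBP : B ≤ P := hBrad ▸ Ideal.le_radical
  have ht0 : t ≠ 0 := fun h => ht (h ▸ P.zero_mem)
  have ht0K : alg t ≠ 0 := fun h =>
    ht0 ((map_eq_zero_iff _ (IsFractionRing.injective R K)).mp h)
  have htn0 : alg (t ^ n) ≠ 0 := fun h =>
    pow_ne_zero n ht0 ((map_eq_zero_iff _ (IsFractionRing.injective R K)).mp h)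
  obtain ⟨s₀, hs₀M, hdiv⟩ := prufer_clear hR hP hBfg hBP hM hPM ht n
  set z : K := alg s₀ * (alg (t ^ n))⁻¹ with hz
  have hside : ∀ p ∈ P, ∀ M' : Ideal R, M'.IsMaximal →
      ∃ σ ∉ M', ∃ r : R, alg σ * (z * alg p) = alg r := by
    intro p hpP M' hM'
    by_cases hPM' : P ≤ M'
    · obtain ⟨s', hs'M', c', hc'P, heq'⟩ := prufer_step_pow hR hP hM' hPM' ht n hpP
      refine ⟨s', hs'M', s₀ * c', ?_⟩
      have h1 : alg s' * (z * alg p) = alg s₀ * (alg (s' * p)) * (alg (t ^ n))⁻¹ := by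
        rw [hz, map_mul]; ring
      rw [h1, heq', map_mul, map_mul]
      field_simp
    · have hBnotle : ¬ B ≤ M' := fun hBM' => hPM' (by
        calc P = B.radical := hBrad.symm
          _ ≤ M'.radical := Ideal.radical_mono hBM'
          _ = M' := hM'.isPrime.radical)
      obtain ⟨b, hbB, hbM'⟩ := SetLike.not_le_iff_exists.mp hBnotle
      obtain ⟨r, hr⟩ := hdiv b hbB
      refine ⟨b, hbM', r * p, ?_⟩
      have h1 : alg b * (z * alg p) = alg (s₀ * b) * alg p * (alg (t ^ n))⁻¹ := by
        rw [hz, map_mul]; ring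
      rw [h1, hr, map_mul, map_mul]
      field_simp
  have hzP : z ∈ (1 / (P : F)) := by
    refine (FractionalIdeal.mem_div_iff_of_ne_zero
      (FractionalIdeal.coeIdeal_ne_zero.mpr hP0)).mpr ?_
    intro w hw
    obtain ⟨p, hpP, rfl⟩ := (FractionalIdeal.mem_coeIdeal _).mp hw
    obtain ⟨r, hr⟩ := glob_mem_one (z * alg p) (hside p hpP)
    exact (FractionalIdeal.mem_one_iff _).mpr ⟨r, hr⟩
  have hu' := (FractionalIdeal.mem_div_iff_of_ne_zero (my_one_div_ne_zero hP0)).mp hu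
  obtain ⟨r, hr⟩ := (FractionalIdeal.mem_one_iff _).mp (hu' z hzP)
  refine ⟨s₀, hs₀M, r, ?_⟩
  have h2 : alg s₀ * u = alg (t ^ n) * (u * z) := by
    rw [hz]; field_simp
  rw [h2, ← hr]

/-- If there is a maximal ideal strictly containing `P`, then `Pᵛ ≤ P`. -/
lemma prufer_pv_le (hR : IsPrufer R) {P : Ideal R} (hP : P.IsPrime) (hP0 : P ≠ ⊥)
    {B : Ideal R} (hBfg : B.FG) (hBrad : B.radical = P)
    {M : Ideal R} (hM : M.IsMaximal) (hPM : P ≤ M) {t₀ : R} (ht₀M : t₀ ∈ M)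
    (ht₀P : t₀ ∉ P) : (1 / (1 / (P : F))) ≤ (P : F) := by
  intro u hu
  have hinj := IsFractionRing.injective R K
  have hu1 : u ∈ (1 : F) := by
    have hu' := (FractionalIdeal.mem_div_iff_of_ne_zero (my_one_div_ne_zero hP0)).mp hu
    simpa using hu' 1 (my_one_le_one_div hP0 (FractionalIdeal.one_mem_one _))
  obtain ⟨uR, huR⟩ := (FractionalIdeal.mem_one_iff _).mp hu1
  rw [← huR]
  refine (FractionalIdeal.mem_coeIdeal _).mpr ⟨uR, ?_, rfl⟩
  by_contra huP
  have hu0 : uR ≠ 0 := fun h => huP (h ▸ P.zero_mem)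
  by_cases huM : uR ∈ M
  · obtain ⟨s, hsM, r, heq⟩ := prufer_key hR hP hP0 hBfg hBrad hM hPM huP 2 hu
    have heqR : s * uR = uR ^ 2 * r := hinj (by rw [map_mul, map_mul, huR, heq])
    have hs : s = uR * r := by
      apply mul_left_cancel₀ hu0
      rw [show uR * (uR * r) = uR ^ 2 * r by ring, ← heqR]; ring
    exact hsM (hs ▸ M.mul_mem_right r huM)
  · obtain ⟨s, hsM, r, heq⟩ := prufer_key hR hP hP0 hBfg hBrad hM hPM ht₀P 1 hu
    have heqR : s * uR = t₀ ^ 1 * r := hinj (by rw [map_mul, map_mul, huR, heq])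
    have hmem : s * uR ∈ M := by
      rw [heqR, pow_one]
      exact M.mul_mem_right r ht₀M
    rcases hM.isPrime.mem_or_mem hmem with h | h
    exacts [hsM h, huM h]

end Helpers3


section Helpers4

set_option linter.unusedSectionVars false
set_option maxHeartbeats 1000000

variable {R : Type*} [CommRing R] [IsDomain R]

local notation "K" => FractionRing R
local notation "alg" => algebraMap R (FractionRing R)
local notation "F" => FractionalIdeal (nonZeroDivisors R) (FractionRing R)

lemma my_div_mul_le (I' J : F) (hJ : J ≠ 0) : (I' / J) * J ≤ I' :=
  (FractionalIdeal.le_div_iff_mul_le hJ).mp le_rfl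

lemma my_mul_right_mono {A B : F} (V : F) (h : A ≤ B) : A * V ≤ B * V :=
  FractionalIdeal.mul_le.mpr fun i hi j hj =>
    FractionalIdeal.mul_mem_mul (h hi) hj

lemma my_le_zero_eq {A : F} (h : A ≤ 0) : A = 0 :=
  le_antisymm h (FractionalIdeal.zero_le _)

lemma my_div_antitone {A B : F} (hA : A ≠ 0) (hAB : A ≤ B) :
    (1 : F) / B ≤ 1 / A := by
  have hB : B ≠ 0 := fun h => hA (my_le_zero_eq (h ▸ hAB))
  intro x hx
  refine (FractionalIdeal.mem_div_iff_of_ne_zero hA).mpr fun w hw =>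
    (FractionalIdeal.mem_div_iff_of_ne_zero hB).mp hx w (hAB hw)

lemma my_self_le_div_div' (C : F) (hC : C ≠ 0) (h1 : 1 / C ≠ 0) :
    C ≤ 1 / (1 / C) := by
  intro w hw
  refine (FractionalIdeal.mem_div_iff_of_ne_zero h1).mpr fun v hv => ?_
  rw [mul_comm]
  exact (FractionalIdeal.mem_div_iff_of_ne_zero hC).mp hv w hw

lemma my_div_div_div (C : F) (hC : C ≠ 0) (h1 : 1 / C ≠ 0) :
    1 / (1 / (1 / C)) = 1 / C := by
  have h2 : 1 / (1 / C) ≠ 0 := fun h => hC (my_le_zero_eq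
    (h ▸ my_self_le_div_div' C hC h1))
  exact le_antisymm (my_div_antitone hC (my_self_le_div_div' C hC h1))
    (my_self_le_div_div' (1 / C) h1 h2)

lemma my_div_unit (C U V : F) (hC : C ≠ 0) (hUV : U * V = 1) :
    1 / (C * U) = (1 / C) * V := by
  have hCU : C * U ≠ 0 := fun h => hC (by
    calc C = C * (U * V) := by rw [hUV, mul_one]
      _ = (C * U) * V := by ring
      _ = 0 := by rw [h, zero_mul])
  refine le_antisymm ?_ ?_
  · have h1 : (1 / (C * U)) * U ≤ 1 / C := by
      refine (FractionalIdeal.le_div_iff_mul_le hC).mpr ?_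
      have : (1 / (C * U)) * U * C = (1 / (C * U)) * (C * U) := by ring
      rw [this]
      exact my_div_mul_le 1 (C * U) hCU
    calc 1 / (C * U) = (1 / (C * U)) * (U * V) := by rw [hUV, mul_one]
      _ = ((1 / (C * U)) * U) * V := by ring
      _ ≤ (1 / C) * V := my_mul_right_mono V h1
  · refine (FractionalIdeal.le_div_iff_mul_le hCU).mpr ?_
    have h2 : (1 / C) * V * (C * U) = ((1 / C) * C) * (V * U) := by ring
    rw [h2, mul_comm V U, hUV, mul_one]
    exact my_div_mul_le 1 C hC

end Helpers4

set_option maxHeartbeats 1000000 in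
/-- If a nonzero prime of a Prüfer domain is the radical of a finitely generated
ideal, then it has a divisorial proper primary ideal. -/
theorem exists_divisorial_proper_primary (R : Type*) [CommRing R] [IsDomain R]
    (hR : IsPrufer R) (P : Ideal R) (hP : P.IsPrime) (h0 : P ≠ ⊥)
    (hrad : ∃ B : Ideal R, B.FG ∧ B.radical = P) :
    ∃ Q : Ideal R, Q.IsPrimary ∧ Q.radical = P ∧ Q < P ∧ IsDivisorial R Q := by
  classical
  obtain ⟨B, hBfg, hBrad⟩ := hrad
  set F := FractionalIdeal (nonZeroDivisors R) (FractionRing R)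
  have hBne : B ≠ ⊥ := by
    rintro rfl
    rw [Ideal.radical_bot_of_noZeroDivisors] at hBrad
    exact h0 hBrad.symm
  have hBP : B ≤ P := hBrad ▸ Ideal.le_radical
  have hBinv : IsUnit (B : F) := hR B hBne hBfg
  obtain ⟨Bi, hBi⟩ := hBinv.exists_right_inv
  have hP0F : (P : F) ≠ 0 := FractionalIdeal.coeIdeal_ne_zero.mpr h0
  have h1d : 1 / (P : F) ≠ 0 := my_one_div_ne_zero h0
  have hPvne : 1 / (1 / (P : F)) ≠ 0 := my_div_div_ne_zero h0
  have hPvle1 : 1 / (1 / (P : F)) ≤ 1 := by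
    intro u hu
    have hu' := (FractionalIdeal.mem_div_iff_of_ne_zero h1d).mp hu
    have h2 := hu' 1 (my_one_le_one_div h0 (FractionalIdeal.one_mem_one _))
    rwa [mul_one] at h2
  obtain ⟨Pv, hPv⟩ := FractionalIdeal.le_one_iff_exists_coeIdeal.mp hPvle1
  have hPPv : P ≤ Pv := by
    have h := my_self_le_div_div (R := R) h0
    rw [← hPv] at h
    exact (FractionalIdeal.coeIdeal_le_coeIdeal _).mp h
  have hQP : Pv * B ≤ P := le_trans Ideal.mul_le_right hBP
  have hPBQ : P * B ≤ Pv * B := Ideal.mul_mono hPPv le_rfl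
  have hradPB : (P * B).radical = P := by
    rw [Ideal.radical_mul, hBrad, hP.radical, inf_idem]
  have hradQ : (Pv * B).radical = P := by
    refine le_antisymm ?_ ?_
    · rw [← hP.radical]; exact Ideal.radical_mono hQP
    · rw [← hradPB]; exact Ideal.radical_mono hPBQ
  have hPveq : ∀ M' : Ideal R, M'.IsMaximal → P ≤ M' → ∀ y ∈ M', y ∉ P → Pv = P := by
    intro M' hM' hPM' y hyM' hyP
    refine le_antisymm ?_ hPPv
    have h := prufer_pv_le hR hP h0 hBfg hBrad hM' hPM' hyM' hyP
    rw [← hPv] at h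
    exact (FractionalIdeal.coeIdeal_le_coeIdeal _).mp h
  -- primary
  have hprimary : (Pv * B).IsPrimary := by
    rw [Ideal.isPrimary_iff]
    refine ⟨fun h => hP.ne_top (top_le_iff.mp (h ▸ hQP)), ?_⟩
    intro x y hxy
    by_cases hyP : y ∈ P
    · right; rwa [hradQ]
    left
    apply glob_mem_ideal
    intro M' hM'
    by_cases hPM' : P ≤ M'
    · by_cases hyM' : y ∈ M'
      · have hPvP : Pv = P := hPveq M' hM' hPM' y hyM' hyP
        have hxy' : x * y ∈ P * B := by rwa [hPvP] at hxy
        have hy0 : y ≠ 0 := fun h => hyP (h ▸ P.zero_mem)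
        have hind : ∀ z ∈ P * B, ∃ σ ∉ M', ∃ c ∈ P * B, σ * z = y * c := by
          intro z hz
          refine Submodule.mul_induction_on hz ?_ ?_
          · intro p hp b hb
            obtain ⟨s, hsM, c, hcP, heq⟩ := prufer_step hR hP hM' hPM' hyP hp
            refine ⟨s, hsM, c * b, Ideal.mul_mem_mul hcP hb, ?_⟩
            calc s * (p * b) = (s * p) * b := by ring
              _ = (y * c) * b := by rw [heq]
              _ = y * (c * b) := by ring
          · rintro z₁ z₂ ⟨σ₁, h₁, c₁, hc₁, e₁⟩ ⟨σ₂, h₂, c₂, hc₂, e₂⟩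
            refine ⟨σ₁ * σ₂, fun h => ?_, σ₂ * c₁ + σ₁ * c₂,
              Ideal.add_mem _ (Ideal.mul_mem_left _ _ hc₁) (Ideal.mul_mem_left _ _ hc₂), ?_⟩
            · rcases hM'.isPrime.mem_or_mem h with h | h
              exacts [h₁ h, h₂ h]
            · calc σ₁ * σ₂ * (z₁ + z₂) = σ₂ * (σ₁ * z₁) + σ₁ * (σ₂ * z₂) := by ring
                _ = σ₂ * (y * c₁) + σ₁ * (y * c₂) := by rw [e₁, e₂]
                _ = y * (σ₂ * c₁ + σ₁ * c₂) := by ring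
        obtain ⟨σ, hσ, c, hc, heq⟩ := hind (x * y) hxy'
        have hσx : σ * x = c := by
          apply mul_left_cancel₀ hy0
          calc y * (σ * x) = σ * (x * y) := by ring
            _ = y * c := heq
        refine ⟨σ, hσ, ?_⟩
        rw [hσx, hPvP]
        exact hc
      · exact ⟨y, hyM', by rwa [mul_comm y x]⟩
    · obtain ⟨p, hpP, hpM'⟩ := SetLike.not_le_iff_exists.mp hPM'
      have hBnotle : ¬ B ≤ M' := fun hBM' => hPM' (by
        calc P = B.radical := hBrad.symm
          _ ≤ M'.radical := Ideal.radical_mono hBM'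
          _ = M' := hM'.isPrime.radical)
      obtain ⟨b, hbB, hbM'⟩ := SetLike.not_le_iff_exists.mp hBnotle
      refine ⟨p * b, fun h => ?_, ?_⟩
      · rcases hM'.isPrime.mem_or_mem h with h | h
        exacts [hpM' h, hbM' h]
      · have h1 : x * p ∈ Pv := Ideal.mul_mem_left _ x (hPPv hpP)
        have h2 : (x * p) * b ∈ Pv * B := Ideal.mul_mem_mul h1 hbB
        rwa [show p * b * x = (x * p) * b by ring]
  -- proper
  have hproper : Pv * B < P := by
    refine lt_of_le_of_ne hQP ?_
    intro hQeq
    have hPB : P ≤ B := hQeq ▸ Ideal.mul_le_right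
    have hBeq : B = P := le_antisymm hBP hPB
    have hPunit : IsUnit (P : F) := hBeq ▸ hBinv
    obtain ⟨Ci, hCi⟩ := hPunit.exists_right_inv
    have hCi0 : Ci ≠ 0 := by
      intro h
      rw [h, mul_zero] at hCi
      exact one_ne_zero hCi.symm
    have hcoe : (Pv : F) * (P : F) = (P : F) := by
      calc (Pv : F) * (P : F) = (Pv : F) * (B : F) := by rw [hBeq]
        _ = ((Pv * B : Ideal R) : F) := (FractionalIdeal.coeIdeal_mul _ _).symm
        _ = (P : F) := by rw [hQeq]
    have hPv1 : (Pv : F) = 1 := by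
      calc (Pv : F) = (Pv : F) * ((P : F) * Ci) := by rw [hCi, mul_one]
        _ = ((Pv : F) * (P : F)) * Ci := by ring
        _ = (P : F) * Ci := by rw [hcoe]
        _ = 1 := hCi
    have hCile : Ci ≤ 1 / (P : F) := by
      intro w hw
      refine (FractionalIdeal.mem_div_iff_of_ne_zero hP0F).mpr fun v hv => ?_
      have h := FractionalIdeal.mul_mem_mul hv hw
      rw [hCi] at h
      rwa [mul_comm w v]
    have h1leP : (1 : F) ≤ (P : F) := by
      calc (1 : F) = (Pv : F) := hPv1.symm
        _ = 1 / (1 / (P : F)) := hPv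
        _ ≤ 1 / Ci := my_div_antitone hCi0 hCile
        _ = (1 / Ci) * ((P : F) * Ci) := by rw [hCi, mul_one]
        _ = ((1 / Ci) * Ci) * (P : F) := by ring
        _ ≤ 1 * (P : F) := my_mul_right_mono _ (my_div_mul_le 1 Ci hCi0)
        _ = (P : F) := one_mul _
    have hPtop : P = ⊤ := by
      have h := h1leP
      rw [← FractionalIdeal.coeIdeal_top] at h
      exact top_le_iff.mp ((FractionalIdeal.coeIdeal_le_coeIdeal _).mp h)
    exact hP.ne_top hPtop
  -- divisorial
  have hQcoe : ((Pv * B : Ideal R) : F) = (1 / (1 / (P : F))) * (B : F) := by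
    rw [FractionalIdeal.coeIdeal_mul, hPv]
  have hBi' : Bi * (B : F) = 1 := by rw [mul_comm]; exact hBi
  have hdiv : IsDivisorial R (Pv * B) := by
    unfold IsDivisorial
    rw [hQcoe, my_div_unit _ _ _ hPvne hBi, my_div_div_div _ hP0F h1d,
      my_div_unit _ _ _ h1d hBi']
  exact ⟨Pv * B, hprimary, hradQ, hproper, hdiv⟩
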